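/- For each degree i, with i-th hook code block (h_{i,1}^{l_{i,1}},...,h_{i,n_i}^{l_{i,n_i}}) in the box δ_{i+1} × (1+δ_i), letting τ_{i,k} = Σ_{j=k}^{n_i} l_{i,j} − h_{i,k} and θ_{i,k} = g_{i,k} − r_{i,k} where g_{i,k} = Σ_{j=k}^{n_i} l_{i,j} − (n_i+1−k) + max{1−h_{i,n_i},0} + max{h_{i,k}−δ_i,0} and r_{i,k} = h_{i,k} − (n_i+1−k) + max{1−h_{i,n_i},0}, one has max{0, θ_{i,1},...,θ_{i,n_i}} = max{δ_{i+1}−δ_i, 0, τ_{i,1},...,τ_{i,n_i}}. -/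

import Mathlib

/-- For the `i`-th hook code block `(h_1^{l_1},…,h_n^{l_n})` in the box
`δ_{i+1} × (1+δ_i)` (so `δ_i + 1 ≥ h_1 > ⋯ > h_n ≥ 0`, `l_k ≥ 1`, `Σ l_k = δ_{i+1}`), with
`τ_k = Σ_{j=k}^{n} l_j - h_k`,
`g_k = Σ_{j=k}^{n} l_j - (n+1-k) + max{1-h_n,0} + max{h_k-δ_i,0}`,
`r_k = h_k - (n+1-k) + max{1-h_n,0}`, and `θ_k = g_k - r_k`:
`max{0, θ_1, …, θ_n} = max{δ_{i+1}-δ_i, 0, τ_1, …, τ_n}`. -/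
theorem max_theta_eq_max_tau (δi δi1 n : ℕ) (hn : 0 < n) (h l : Fin n → ℕ)
    (hh : StrictAnti h) (hhb : ∀ x, h x ≤ δi + 1) (hl : ∀ x, 1 ≤ l x)
    (hsum : ∑ x, l x = δi1) :
    Finset.fold max (0 : ℤ)
      (fun x =>
        (((∑ i ∈ Finset.univ.filter (fun i => x ≤ i), (l i : ℤ)) - ((n : ℤ) - x) +
            max (1 - (h ⟨n - 1, Nat.sub_lt hn Nat.one_pos⟩ : ℤ)) 0 +
            max ((h x : ℤ) - δi) 0) -
          ((h x : ℤ) - ((n : ℤ) - x) +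
            max (1 - (h ⟨n - 1, Nat.sub_lt hn Nat.one_pos⟩ : ℤ)) 0)))
      Finset.univ =
    Finset.fold max (max ((δi1 : ℤ) - δi) 0)
      (fun x => (∑ i ∈ Finset.univ.filter (fun i => x ≤ i), (l i : ℤ)) - h x)
      Finset.univ := by
  set S : Fin n → ℤ := fun x => ∑ i ∈ Finset.univ.filter (fun i => x ≤ i), (l i : ℤ) with hS
  have hθ : ∀ x : Fin n,
      (((S x) - ((n : ℤ) - x) +
            max (1 - (h ⟨n - 1, Nat.sub_lt hn Nat.one_pos⟩ : ℤ)) 0 +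
            max ((h x : ℤ) - δi) 0) -
          ((h x : ℤ) - ((n : ℤ) - x) +
            max (1 - (h ⟨n - 1, Nat.sub_lt hn Nat.one_pos⟩ : ℤ)) 0)) =
      S x - h x + max ((h x : ℤ) - δi) 0 := fun x => by ring
  have hSle : ∀ x : Fin n, S x ≤ (δi1 : ℤ) := by
    intro x
    rw [hS]
    calc ∑ i ∈ Finset.univ.filter (fun i => x ≤ i), (l i : ℤ)
        ≤ ∑ i, (l i : ℤ) := Finset.sum_le_sum_of_subset_of_nonneg
          (Finset.filter_subset _ _) (fun i _ _ => by positivity)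
      _ = (δi1 : ℤ) := by rw [← hsum]; push_cast; ring
  have hS0 : S ⟨0, hn⟩ = (δi1 : ℤ) := by
    rw [hS]
    have : Finset.univ.filter (fun i => (⟨0, hn⟩ : Fin n) ≤ i) = Finset.univ := by
      apply Finset.filter_true_of_mem
      intro i _
      exact Fin.mk_le_mk.mpr (Nat.zero_le _)
    simp only [this, ← hsum]; push_cast; ring
  have hfun : (fun x : Fin n =>
        (((∑ i ∈ Finset.univ.filter (fun i => x ≤ i), (l i : ℤ)) - ((n : ℤ) - x) +
            max (1 - (h ⟨n - 1, Nat.sub_lt hn Nat.one_pos⟩ : ℤ)) 0 +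
            max ((h x : ℤ) - δi) 0) -
          ((h x : ℤ) - ((n : ℤ) - x) +
            max (1 - (h ⟨n - 1, Nat.sub_lt hn Nat.one_pos⟩ : ℤ)) 0))) =
      fun x => S x - h x + max ((h x : ℤ) - δi) 0 := funext hθ
  have hfun2 : (fun x : Fin n => (∑ i ∈ Finset.univ.filter (fun i => x ≤ i), (l i : ℤ)) - h x) =
      fun x => S x - h x := rfl
  rw [hfun, hfun2]
  apply le_antisymm
  · rw [Finset.fold_max_le]
    refine ⟨(Finset.le_fold_max _).mpr (Or.inl (le_max_right _ _)), fun x _ => ?_⟩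
    rw [Finset.le_fold_max _]
    by_cases hx : (h x : ℤ) ≤ δi
    · right
      exact ⟨x, Finset.mem_univ x, by rw [max_eq_right (by linarith)]; simp [hS]⟩
    · left
      have hx1 : (h x : ℤ) = δi + 1 := by
        have := hhb x; push_cast at *; omega
      rw [hx1]
      have : max ((δi : ℤ) + 1 - δi) 0 = 1 := by norm_num
      rw [this]
      have := hSle x
      calc S x - ((δi : ℤ) + 1) + 1 = S x - δi := by ring
        _ ≤ (δi1 : ℤ) - δi := by linarith
        _ ≤ max ((δi1 : ℤ) - δi) 0 := le_max_left _ _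
  · rw [Finset.fold_max_le]
    constructor
    · rw [max_le_iff]
      constructor
      · rw [Finset.le_fold_max _]
        right
        refine ⟨⟨0, hn⟩, Finset.mem_univ _, ?_⟩
        have h1 : (h ⟨0, hn⟩ : ℤ) - δi ≤ max ((h ⟨0, hn⟩ : ℤ) - δi) 0 := le_max_left _ _
        rw [hS0] at *
        linarith
      · exact (Finset.le_fold_max _).mpr (Or.inl le_rfl)
    · intro x _
      rw [Finset.le_fold_max _]
      right
      refine ⟨x, Finset.mem_univ x, ?_⟩
      have : (0:ℤ) ≤ max ((h x : ℤ) - δi) 0 := le_max_right _ _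
      linarith
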